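/- Let f ∈ ℤ[X] be nonzero and let g₁,…,g_m ∈ ℤ[X] be such that for every complex root z of f, at least one gᵢ does not vanish at z. For each root z, let i(z) be the smallest index with g_{i(z)}(z) ≠ 0, and let μ(z) be the multiplicity of z as a root of f. Then ∏_{z root of f} |g_{i(z)}(z)|^{μ(z)} ≥ |lc(f)|^{−n₂}, where n₂ = max degree of the gᵢ. In particular this product is nonzero. -/

import Mathlib

open Polynomial


open MvPolynomial AddMonoidAlgebra Finset in
lemma aux_symm_span {d N : ℕ} (p : MvPolynomial (Fin d) ℤ) (hsym : p.IsSymmetric)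
    (hdeg : ∀ j, (ofLex (AddMonoidAlgebra.supDegree toLex p)) j ≤ N) :
    ∃ q : MvPolynomial (Fin d) ℤ,
      (∀ t ∈ q.support, (t.sum fun _ e => e) ≤ N) ∧
      MvPolynomial.aeval (fun i : Fin d => MvPolynomial.esymm (Fin d) ℤ ((i : ℕ) + 1)) q = p := by
  induction' he : p.supDegree toLex using WellFoundedLT.induction with s ih generalizing p
  subst he
  rcases eq_or_ne p 0 with rfl | h0
  · exact ⟨0, by simp, by simp⟩
  set r := p.leadingCoeff toLex with hr
  have hr0 : r ≠ 0 := by rwa [hr, Ne, AddMonoidAlgebra.leadingCoeff_eq_zero toLex.injective]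
  set t : Fin d →₀ ℕ :=
    Finsupp.equivFunOnFinite.symm (Fin.invAccumulate d d <| ↑(ofLex <| p.supDegree toLex)) with htdef
  have hacc : Fin.accumulate d d ⇑t = ⇑(ofLex <| p.supDegree toLex) := by
    exact Fin.accumulate_invAccumulate le_rfl hsym.antitone_supDegree
  have htsum : (t.sum fun _ e => e) ≤ N := by
    have : (t.sum fun _ e => e) = ∑ i : Fin d, t i :=
      Finsupp.sum_fintype _ _ (fun _ => rfl)
    rw [this]
    rcases Nat.eq_zero_or_pos d with hd | hd
    · subst hd; simp
    · have h0' : (∑ i : Fin d, t i) = Fin.accumulate d d ⇑t ⟨0, hd⟩ := by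
        rw [Fin.accumulate_apply]
        exact Finset.sum_congr (by ext i; simp) (fun _ _ => rfl)
      rw [h0', hacc]; exact hdeg _
  have hd : (esymmAlgHomMonomial (Fin d) t r).supDegree toLex = p.supDegree toLex := by
    rw [← ofLex_inj, DFunLike.ext'_iff, supDegree_esymmAlgHomMonomial hr0 _ le_rfl]
    exact hacc
  have haeval : MvPolynomial.aeval (fun i : Fin d => MvPolynomial.esymm (Fin d) ℤ ((i : ℕ) + 1))
      (MvPolynomial.monomial t r) = esymmAlgHomMonomial (Fin d) t r := by
    rw [esymmAlgHomMonomial, esymmAlgHom_apply]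
  obtain he | hne := eq_or_ne p (esymmAlgHomMonomial (Fin d) t r)
  · refine ⟨MvPolynomial.monomial t r, ?_, by rw [haeval, ← he]⟩
    intro t' ht'
    rw [MvPolynomial.support_monomial, if_neg hr0] at ht'
    rw [Finset.mem_singleton] at ht'
    subst ht'; exact htsum
  have hlt : (p - esymmAlgHomMonomial (Fin d) t r).supDegree toLex < p.supDegree toLex := by
    refine (supDegree_sub_lt_of_leadingCoeff_eq toLex.injective hd.symm ?_).resolve_right hne
    rw [leadingCoeff_esymmAlgHomMonomial t le_rfl]
  have hsym' : (p - esymmAlgHomMonomial (Fin d) t r).IsSymmetric :=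
    hsym.sub (isSymmetric_esymmAlgHomMonomial _ _)
  have hdeg' : ∀ j, (ofLex (AddMonoidAlgebra.supDegree toLex
      (p - esymmAlgHomMonomial (Fin d) t r))) j ≤ N := by
    intro j
    have hdpos : 0 < d := lt_of_le_of_lt (Nat.zero_le _) j.isLt
    have hmono := hsym'.antitone_supDegree (Fin.mk_le_of_le_val (Nat.zero_le _) :
      (⟨0, hdpos⟩ : Fin d) ≤ j)
    refine hmono.trans ?_
    have h00 : (ofLex ((p - esymmAlgHomMonomial (Fin d) t r).supDegree toLex)) ⟨0, hdpos⟩ ≤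
        (ofLex (p.supDegree toLex)) ⟨0, hdpos⟩ := by
      obtain ⟨i, hbef, hat⟩ := Finsupp.Lex.lt_iff.mp hlt
      rcases eq_or_lt_of_le (Fin.mk_le_of_le_val (Nat.zero_le _) : (⟨0, hdpos⟩ : Fin d) ≤ i)
        with hi | hi
      · rw [← hi] at hat; exact le_of_lt hat
      · rw [hbef _ hi]
    exact h00.trans (hdeg _)
  obtain ⟨q', hq'1, hq'2⟩ := ih _ hlt _ hsym' hdeg' rfl
  refine ⟨q' + MvPolynomial.monomial t r, ?_, ?_⟩
  · intro t' ht'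
    rcases Finset.mem_union.mp (MvPolynomial.support_add ht') with h | h
    · exact hq'1 _ h
    · rw [MvPolynomial.support_monomial, if_neg hr0, Finset.mem_singleton] at h
      subst h; exact htsum
  · rw [map_add, hq'2, haeval]; ring

open MvPolynomial in
lemma aux_degreeOf_aeval_X_le {d : ℕ} (g : Polynomial ℤ) (i j : Fin d) :
    MvPolynomial.degreeOf j (Polynomial.aeval (MvPolynomial.X i : MvPolynomial (Fin d) ℤ) g)
      ≤ if i = j then g.natDegree else 0 := by
  rw [Polynomial.aeval_eq_sum_range]
  refine (MvPolynomial.degreeOf_sum_le _ _ _).trans ?_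
  rw [Finset.sup_le_iff]
  intro k hk
  rw [Finset.mem_range, Nat.lt_succ_iff] at hk
  rw [MvPolynomial.smul_eq_C_mul]
  refine (MvPolynomial.degreeOf_C_mul_le _ _ _).trans ?_
  refine (MvPolynomial.degreeOf_pow_le _ _ _).trans ?_
  rw [MvPolynomial.degreeOf_X]
  split_ifs with h h2 h3
  · simpa using hk
  · exact absurd h.symm h2
  · exact absurd h3.symm h
  · simp

lemma aux_key (p : Polynomial ℤ) (G : Polynomial ℤ) {n : ℕ} (hG : G.natDegree ≤ n) :
    ∃ a : ℤ, (a : ℂ) = (p.leadingCoeff : ℂ) ^ n *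
      ((p.map (Int.castRingHom ℂ)).roots.map fun z => Polynomial.aeval z G).prod := by
  classical
  set pc := p.map (Int.castRingHom ℂ) with hpc
  have hcard : Multiset.card pc.roots = pc.natDegree :=
    Polynomial.splits_iff_card_roots.mp (IsAlgClosed.splits pc)
  set l := pc.roots.toList with hldef
  have hl : (l : Multiset ℂ) = pc.roots := Multiset.coe_toList _
  set D := l.length with hDdef
  set v : Fin D → ℂ := l.get with hvdef
  have hv : Finset.univ.val.map v = pc.roots := by
    rw [Fin.univ_val_map, hvdef, List.ofFn_get, hl]
  have hD : (D : ℕ) = pc.natDegree := by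
    rw [← hcard, ← hl]; simp [hDdef]
  set P : MvPolynomial (Fin D) ℤ :=
    ∏ i : Fin D, Polynomial.aeval (MvPolynomial.X i) G with hPdef
  have hPsym : P.IsSymmetric := by
    intro e
    show MvPolynomial.rename e P = P
    rw [hPdef, map_prod (MvPolynomial.rename (R := ℤ) e) _ Finset.univ]
    simp_rw [← Polynomial.aeval_algHom_apply, MvPolynomial.rename_X]
    exact Equiv.prod_comp e fun j => Polynomial.aeval (MvPolynomial.X j) G
  have hdegP : ∀ j, (ofLex (AddMonoidAlgebra.supDegree toLex P)) j ≤ n := by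
    intro j
    rcases eq_or_ne P 0 with h0 | h0
    · rw [h0, AddMonoidAlgebra.supDegree_zero]
      have : (ofLex (⊥ : Lex (Fin D →₀ ℕ))) j = 0 := rfl
      rw [this]; exact Nat.zero_le _
    obtain ⟨a, ha, hae⟩ := AddMonoidAlgebra.exists_supDegree_mem_support toLex h0
    rw [hae]
    have h1 : (ofLex (toLex a)) j ≤ MvPolynomial.degreeOf j P := by
      rw [MvPolynomial.degreeOf_eq_sup]
      exact Finset.le_sup (f := fun m => m j) ha
    refine h1.trans ?_
    rw [hPdef]
    refine (MvPolynomial.degreeOf_prod_le _ _ _).trans ?_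
    refine (Finset.sum_le_sum fun i _ => aux_degreeOf_aeval_X_le G i j).trans ?_
    rw [Finset.sum_ite_eq' Finset.univ j fun _ => G.natDegree]
    simpa using hG
  obtain ⟨q, hq1, hq2⟩ := aux_symm_span P hPsym hdegP
  -- the subring of ℂ which is the range of ℤ
  set S : Subring ℂ := (Int.castRingHom ℂ).range with hSdef
  have hlc : ((p.leadingCoeff : ℂ)) = pc.leadingCoeff := by
    rw [hpc, Polynomial.leadingCoeff_map_of_injective Int.cast_injective]
    rfl
  have hmem : (p.leadingCoeff : ℂ) ^ n *
      ((pc.roots.map fun z => Polynomial.aeval z G).prod) ∈ S := by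
    have hφP : (MvPolynomial.aeval v) P = (pc.roots.map fun z => Polynomial.aeval z G).prod := by
      rw [hPdef, map_prod (MvPolynomial.aeval (R := ℤ) v) (fun i => Polynomial.aeval (MvPolynomial.X i) G) Finset.univ]
      simp_rw [← Polynomial.aeval_algHom_apply, MvPolynomial.aeval_X]
      rw [← hv, hvdef, Fin.univ_val_map, Multiset.map_coe, Multiset.prod_coe,
        List.map_ofFn, List.prod_ofFn]
      rfl
    rw [← hφP, ← hq2, MvPolynomial.comp_aeval_apply, MvPolynomial.aeval_def,
      MvPolynomial.eval₂_eq, Finset.mul_sum]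
    refine Subring.sum_mem _ fun t ht => ?_
    -- weight of t
    have hw : (∑ i ∈ t.support, t i) ≤ n := by
      have := hq1 t ht
      rwa [Finsupp.sum] at this
    have hEsymm : ∀ i : Fin D,
        (MvPolynomial.aeval v) (MvPolynomial.esymm (Fin D) ℤ ((i : ℕ) + 1))
          = pc.roots.esymm ((i : ℕ) + 1) := by
      intro i
      rw [MvPolynomial.aeval_esymm_eq_multiset_esymm, hv]
    -- Vieta : lc * esymm value is (cast of) an integer
    have hvieta : ∀ i : Fin D, (p.leadingCoeff : ℂ) * pc.roots.esymm ((i : ℕ) + 1)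
        = (((-1 : ℤ) ^ ((i : ℕ) + 1) * p.coeff (pc.natDegree - ((i : ℕ) + 1)) : ℤ) : ℂ) := by
      intro i
      have hi1 : (i : ℕ) + 1 ≤ pc.natDegree := by rw [← hD]; exact i.isLt
      have hk : pc.natDegree - (pc.natDegree - ((i : ℕ) + 1)) = (i : ℕ) + 1 :=
        Nat.sub_sub_self hi1
      have := Polynomial.coeff_eq_esymm_roots_of_card hcard
        (k := pc.natDegree - ((i : ℕ) + 1)) (Nat.sub_le _ _)
      rw [hk] at this
      have hcoeff : pc.coeff (pc.natDegree - ((i : ℕ) + 1))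
          = ((p.coeff (pc.natDegree - ((i : ℕ) + 1)) : ℤ) : ℂ) := by
        rw [hpc, Polynomial.coeff_map]; rfl
      rw [hcoeff, ← hlc] at this
      push_cast
      rw [this]
      have h2 : ((-1 : ℂ)) ^ ((i : ℕ) + 1) * ((-1 : ℂ)) ^ ((i : ℕ) + 1) = 1 := by
        rw [← pow_add]; exact Even.neg_one_pow ⟨(i : ℕ) + 1, by ring⟩
      linear_combination (-((p.leadingCoeff : ℂ) * pc.roots.esymm ((i : ℕ) + 1))) * h2
    have hsplit : (p.leadingCoeff : ℂ) ^ n *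
        ∏ i ∈ t.support, (pc.roots.esymm ((i : ℕ) + 1)) ^ t i
        = (p.leadingCoeff : ℂ) ^ (n - ∑ i ∈ t.support, t i) *
          ∏ i ∈ t.support, ((p.leadingCoeff : ℂ) * pc.roots.esymm ((i : ℕ) + 1)) ^ t i := by
      simp_rw [mul_pow]
      rw [Finset.prod_mul_distrib, Finset.prod_pow_eq_pow_sum, ← mul_assoc, ← pow_add,
        Nat.sub_add_cancel hw]
    simp only [hEsymm]
    rw [show (p.leadingCoeff : ℂ) ^ n * ((algebraMap ℤ ℂ) (MvPolynomial.coeff t q) *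
        ∏ i ∈ t.support, (pc.roots.esymm ((i : ℕ) + 1)) ^ t i)
        = (algebraMap ℤ ℂ) (MvPolynomial.coeff t q) *
          ((p.leadingCoeff : ℂ) ^ n * ∏ i ∈ t.support, (pc.roots.esymm ((i : ℕ) + 1)) ^ t i)
        by ring, hsplit]
    have hc : ∀ x : ℤ, ((x : ℤ) : ℂ) ∈ S := fun x => RingHom.mem_range_self _ x
    rw [algebraMap_int_eq]
    refine Subring.mul_mem _ (RingHom.mem_range_self _ _)
      (Subring.mul_mem _ (Subring.pow_mem _ (hc _) _) ?_)
    refine Subring.prod_mem _ fun i _ => Subring.pow_mem _ ?_ _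
    rw [hvieta i]
    exact hc _
  obtain ⟨a, ha⟩ := hmem
  exact ⟨a, by rw [← ha, eq_intCast]⟩


lemma aux_vanish_transfer (p : Polynomial ℤ) (hirr : Irreducible p) {z z' : ℂ}
    (hz : ((p.map (Int.castRingHom ℂ))).IsRoot z) (hz' : ((p.map (Int.castRingHom ℂ))).IsRoot z')
    (h : Polynomial ℤ) (hh : Polynomial.aeval z h = 0) : Polynomial.aeval z' h = 0 := by
  have hp0 : p ≠ 0 := hirr.ne_zero
  have haz : Polynomial.aeval z p = 0 := by
    rwa [Polynomial.aeval_def, ← Polynomial.eval_map, algebraMap_int_eq]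
  have haz' : Polynomial.aeval z' p = 0 := by
    rwa [Polynomial.aeval_def, ← Polynomial.eval_map, algebraMap_int_eq]
  have hdeg : 0 < p.natDegree := by
    by_contra hd
    push_neg at hd
    interval_cases hdeg : p.natDegree
    · have := Polynomial.eq_C_of_natDegree_eq_zero hdeg
      rw [this] at haz
      simp at haz
      exact hp0 (by rw [this, haz, map_zero])
  have hprim : p.IsPrimitive := by
    intro r hr
    obtain ⟨w, hw⟩ := hr
    rcases hirr.isUnit_or_isUnit hw with h1 | h1
    · exact Polynomial.isUnit_C.mp h1
    · exfalso
      have : p.natDegree = 0 := by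
        rw [hw]
        refine le_antisymm ((Polynomial.natDegree_mul_le).trans ?_) (Nat.zero_le _)
        simp [Polynomial.natDegree_eq_zero_of_isUnit h1]
      omega
  have hirrQ : Irreducible (p.map (Int.castRingHom ℚ)) :=
    (Polynomial.IsPrimitive.Int.irreducible_iff_irreducible_map_cast hprim).mp hirr
  set pQ := p.map (Int.castRingHom ℚ) with hpQ
  have hazQ : Polynomial.aeval z pQ = 0 := by
    rw [hpQ, ← algebraMap_int_eq, Polynomial.aeval_map_algebraMap]; exact haz
  have hazQ' : Polynomial.aeval z' pQ = 0 := by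
    rw [hpQ, ← algebraMap_int_eq, Polynomial.aeval_map_algebraMap]; exact haz'
  set M := minpoly ℚ z with hM
  have hMdvd : M ∣ pQ := minpoly.dvd ℚ z hazQ
  obtain ⟨w, hw⟩ := hMdvd
  have hwu : IsUnit w := by
    rcases hirrQ.isUnit_or_isUnit hw with h1 | h1
    · exact absurd h1 (minpoly.not_isUnit ℚ z)
    · exact h1
  have hMz' : Polynomial.aeval z' M = 0 := by
    obtain ⟨u, hu, hCu⟩ := Polynomial.isUnit_iff.mp hwu
    have : Polynomial.aeval z' pQ = Polynomial.aeval z' M * u := by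
      rw [hw, map_mul, ← hCu, Polynomial.aeval_C]
      rfl
    rw [hazQ'] at this
    have hu0 : (u : ℚ) ≠ 0 := hu.ne_zero
    rcases mul_eq_zero.mp this.symm with h2 | h2
    · exact h2
    · exact absurd h2 (by exact_mod_cast hu0)
  -- now transfer h
  have hhQ : Polynomial.aeval z (h.map (Int.castRingHom ℚ)) = 0 := by
    rw [← algebraMap_int_eq, Polynomial.aeval_map_algebraMap]; exact hh
  obtain ⟨w2, hw2⟩ := minpoly.dvd ℚ z hhQ
  have : Polynomial.aeval z' (h.map (Int.castRingHom ℚ)) = 0 := by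
    rw [hw2, map_mul, hMz', zero_mul]
  rwa [← algebraMap_int_eq, Polynomial.aeval_map_algebraMap] at this

lemma aux_factor_bound {m n₂ : ℕ} (g : Fin m → Polynomial ℤ) (hgd : ∀ i, (g i).natDegree ≤ n₂)
    (f : Polynomial ℤ) (hf : f ≠ 0) (ι : ℂ → Fin m)
    (hι : ∀ z : ℂ, (f.map (Int.castRingHom ℂ)).IsRoot z →
      Polynomial.aeval z (g (ι z)) ≠ 0 ∧ ∀ j < ι z, Polynomial.aeval z (g j) = 0)
    (p : Polynomial ℤ) (hirr : Irreducible p) (hdvd : p ∣ f) :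
    1 ≤ ((p.leadingCoeff.natAbs : ℝ)) ^ n₂ *
      ((p.map (Int.castRingHom ℂ)).roots.map
        fun z => ‖Polynomial.aeval z (g (ι z))‖).prod := by
  have hp0 : p ≠ 0 := hirr.ne_zero
  have hlc1 : (1 : ℝ) ≤ (p.leadingCoeff.natAbs : ℝ) := by
    have h1 : p.leadingCoeff ≠ 0 := Polynomial.leadingCoeff_ne_zero.mpr hp0
    have : 1 ≤ p.leadingCoeff.natAbs := by omega
    exact_mod_cast this
  set pc := p.map (Int.castRingHom ℂ) with hpc
  have hfc0 : f.map (Int.castRingHom ℂ) ≠ 0 := by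
    rwa [Ne, Polynomial.map_eq_zero_iff Int.cast_injective]
  have hpc0 : pc ≠ 0 := by
    rw [hpc]; rwa [Ne, Polynomial.map_eq_zero_iff Int.cast_injective]
  have hrootf : ∀ z ∈ pc.roots, (f.map (Int.castRingHom ℂ)).IsRoot z := by
    intro z hzr
    obtain ⟨w, hw⟩ := hdvd
    have hzp : pc.IsRoot z := (Polynomial.mem_roots hpc0).mp hzr
    rw [hw, Polynomial.map_mul]
    show Polynomial.eval z _ = 0
    rw [Polynomial.eval_mul, hzp.eq_zero, zero_mul]
  rcases Multiset.empty_or_exists_mem pc.roots with hemp | ⟨z₀, hz₀⟩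
  · rw [hemp]
    simpa using one_le_pow₀ hlc1
  have hz₀p : pc.IsRoot z₀ := (Polynomial.mem_roots hpc0).mp hz₀
  have hconst : ∀ z ∈ pc.roots, ι z = ι z₀ := by
    intro z hz
    have hzp : pc.IsRoot z := (Polynomial.mem_roots hpc0).mp hz
    have hA := hι z (hrootf z hz)
    have hB := hι z₀ (hrootf z₀ hz₀)
    rcases lt_trichotomy (ι z) (ι z₀) with hlt | heq | hlt
    · exfalso
      exact hA.1 (aux_vanish_transfer p hirr hz₀p hzp _ (hB.2 _ hlt))
    · exact heq
    · exfalso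
      exact hB.1 (aux_vanish_transfer p hirr hzp hz₀p _ (hA.2 _ hlt))
  have hprodeq : (pc.roots.map fun z => ‖Polynomial.aeval z (g (ι z))‖).prod
      = (pc.roots.map fun z => ‖Polynomial.aeval z (g (ι z₀))‖).prod := by
    congr 1
    exact Multiset.map_congr rfl fun z hz => by rw [hconst z hz]
  obtain ⟨a, ha⟩ := aux_key p (g (ι z₀)) (hgd (ι z₀))
  have hne : ∀ z ∈ pc.roots, Polynomial.aeval z (g (ι z₀)) ≠ 0 := by
    intro z hz
    rw [← hconst z hz]
    exact (hι z (hrootf z hz)).1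
  have ha0 : a ≠ 0 := by
    intro h0
    rw [h0] at ha
    have : ((p.leadingCoeff : ℂ)) ^ n₂ *
        ((pc.roots.map fun z => Polynomial.aeval z (g (ι z₀))).prod) ≠ 0 := by
      apply mul_ne_zero
      · apply pow_ne_zero
        exact_mod_cast Polynomial.leadingCoeff_ne_zero.mpr hp0
      · apply Multiset.prod_ne_zero
        intro hmem
        obtain ⟨z, hz, hz2⟩ := Multiset.mem_map.mp hmem
        exact hne z hz hz2
    rw [← hpc] at ha
    exact this (by rw [← ha]; norm_num)
  have habs : (1 : ℝ) ≤ ‖(a : ℂ)‖ := by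
    rw [Complex.norm_intCast]
    have : 1 ≤ |a| := Int.one_le_abs ha0
    calc (1:ℝ) ≤ ((|a| : ℤ) : ℝ) := by exact_mod_cast this
    _ = |(a : ℝ)| := by push_cast; rfl
  rw [hprodeq]
  calc (1 : ℝ) ≤ ‖(a : ℂ)‖ := habs
  _ = ((p.leadingCoeff.natAbs : ℝ)) ^ n₂ *
      ((pc.roots.map fun z => ‖Polynomial.aeval z (g (ι z₀))‖).prod) := by
    rw [ha, ← hpc, norm_mul, norm_pow, Complex.norm_intCast,
      show ‖(pc.roots.map fun z => Polynomial.aeval z (g (ι z₀))).prod‖ = _ from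
        map_multiset_prod (normHom : ℂ →*₀ ℝ) _,
      Multiset.map_map]
    congr 2
    rw [Nat.cast_natAbs, Int.cast_abs]

lemma aux_multiset_sum_prod {α : Type*} (S : Multiset (Multiset α)) (F : α → ℝ) :
    (S.sum.map F).prod = (S.map fun s => (s.map F).prod).prod := by
  induction S using Multiset.induction_on with
  | empty => simp
  | cons s S ih => simp [Multiset.map_add, ih]

/-- Let f ∈ ℤ[X] be nonzero and g₁,…,g_m ∈ ℤ[X] of degree ≤ n₂ be such that at
every complex root z of f some gᵢ does not vanish; let i(z) be the smallest such
index and μ(z) the multiplicity of z.  Then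
∏_{z root of f} |g_{i(z)}(z)|^{μ(z)} ≥ |lc(f)|^{−n₂} (in particular it is nonzero). -/
theorem prod_abs_eval_ge (f : Polynomial ℤ) (hf : f ≠ 0)
    (m : ℕ) (hm : 1 ≤ m) (g : Fin m → Polynomial ℤ)
    (n₂ : ℕ) (hgd : ∀ i, (g i).natDegree ≤ n₂)
    (ι : ℂ → Fin m)
    (hι : ∀ z : ℂ, (f.map (Int.castRingHom ℂ)).IsRoot z →
      ((g (ι z)).map (Int.castRingHom ℂ)).eval z ≠ 0 ∧
        ∀ j < ι z, ((g j).map (Int.castRingHom ℂ)).eval z = 0) :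
    ((f.leadingCoeff.natAbs : ℝ)) ^ (-(n₂ : ℤ)) ≤
      ∏ z ∈ (f.map (Int.castRingHom ℂ)).roots.toFinset,
        ‖((g (ι z)).map (Int.castRingHom ℂ)).eval z‖ ^
          ((f.map (Int.castRingHom ℂ)).rootMultiplicity z) := by
  classical
  have hev : ∀ (h : Polynomial ℤ) (z : ℂ),
      (h.map (Int.castRingHom ℂ)).eval z = Polynomial.aeval z h := by
    intro h z
    rw [Polynomial.aeval_def, ← Polynomial.eval_map, algebraMap_int_eq]
  -- rephrase hι
  have hι' : ∀ z : ℂ, (f.map (Int.castRingHom ℂ)).IsRoot z →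
      Polynomial.aeval z (g (ι z)) ≠ 0 ∧ ∀ j < ι z, Polynomial.aeval z (g j) = 0 := by
    intro z hz
    obtain ⟨h1, h2⟩ := hι z hz
    rw [hev] at h1
    exact ⟨h1, fun j hj => by rw [← hev]; exact h2 j hj⟩
  set fc := f.map (Int.castRingHom ℂ) with hfc
  set F : ℂ → ℝ := fun z => ‖Polynomial.aeval z (g (ι z))‖ with hF
  -- convert the Finset product to a multiset product
  have hconv : ∏ z ∈ fc.roots.toFinset,
        ‖((g (ι z)).map (Int.castRingHom ℂ)).eval z‖ ^ (fc.rootMultiplicity z)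
      = (fc.roots.map F).prod := by
    rw [Finset.prod_multiset_map_count]
    refine Finset.prod_congr rfl fun z _ => ?_
    rw [Polynomial.count_roots, hF, hev]
  rw [hconv]
  -- factorization of f
  set W := UniqueFactorizationMonoid.factors f with hW
  obtain ⟨u, hu⟩ := (UniqueFactorizationMonoid.factors_prod hf)
  obtain ⟨r, hru, hCr⟩ := Polynomial.isUnit_iff.mp u.isUnit
  have hfW : W.prod * Polynomial.C r = f := by rw [hCr, hu]
  have hW0 : ∀ p ∈ W, p ≠ 0 := fun p hp =>
    (UniqueFactorizationMonoid.irreducible_of_factor p hp).ne_zero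
  have hr0 : (Int.castRingHom ℂ) r ≠ 0 := by
    simp only [eq_intCast, Ne, Int.cast_eq_zero]
    exact hru.ne_zero
  -- roots decomposition
  have hroots : fc.roots = (W.map fun p => (p.map (Int.castRingHom ℂ)).roots).sum := by
    rw [hfc, ← hfW, Polynomial.map_mul, Polynomial.map_C, mul_comm,
      Polynomial.roots_C_mul _ hr0]
    have hmap : (W.prod).map (Int.castRingHom ℂ)
        = (W.map fun p => p.map (Int.castRingHom ℂ)).prod := by
      have := (Multiset.prod_hom W (Polynomial.mapRingHom (Int.castRingHom ℂ)).toMonoidHom).symm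
      simpa using this
    rw [hmap, Polynomial.roots_multiset_prod]
    · rw [Multiset.bind, Multiset.map_map]
      rfl
    · intro h0
      obtain ⟨p, hp, hp0⟩ := Multiset.mem_map.mp h0
      exact (hW0 p hp) (by rwa [Polynomial.map_eq_zero_iff Int.cast_injective] at hp0)
  -- per-factor bound, multiplied up
  have hperf : ∀ p ∈ W, (1:ℝ) ≤ ((p.leadingCoeff.natAbs : ℝ)) ^ n₂ *
      ((p.map (Int.castRingHom ℂ)).roots.map F).prod := by
    intro p hp
    exact aux_factor_bound g hgd f hf ι hι' p
      (UniqueFactorizationMonoid.irreducible_of_factor p hp)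
      (UniqueFactorizationMonoid.dvd_of_mem_factors hp)
  have htot : (1:ℝ) ≤ (W.map fun p => ((p.leadingCoeff.natAbs : ℝ)) ^ n₂ *
      ((p.map (Int.castRingHom ℂ)).roots.map F).prod).prod := by
    apply Multiset.one_le_prod
    intro x hx
    obtain ⟨p, hp, hpe⟩ := Multiset.mem_map.mp hx
    rw [← hpe]
    exact hperf p hp
  rw [Multiset.prod_map_mul] at htot
  -- identify pieces
  have hQ : (W.map fun p => ((p.map (Int.castRingHom ℂ)).roots.map F).prod).prod
      = (fc.roots.map F).prod := by
    rw [hroots, aux_multiset_sum_prod, Multiset.map_map]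
    rfl
  have hA : (W.map fun p => ((p.leadingCoeff.natAbs : ℝ)) ^ n₂).prod
      = ((f.leadingCoeff.natAbs : ℝ)) ^ n₂ := by
    have h1 := Multiset.prod_hom (W.map fun p => ((p.leadingCoeff.natAbs : ℝ)))
      (powMonoidHom n₂ : ℝ →* ℝ)
    rw [Multiset.map_map] at h1
    simp only [Function.comp, powMonoidHom_apply] at h1
    rw [h1]
    congr 1
    -- product of |lc| over factors equals |lc f|
    have h2 : (W.map fun p => (p.leadingCoeff.natAbs : ℝ)).prod
        = |(((W.map Polynomial.leadingCoeff).prod : ℤ) : ℝ)| := by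
      induction W using Multiset.induction_on with
      | empty => simp
      | cons a T ih =>
        simp only [Multiset.map_cons, Multiset.prod_cons, ih]
        push_cast
        rw [abs_mul, Nat.cast_natAbs, Int.cast_abs]
    rw [h2]
    have h3 : (W.map Polynomial.leadingCoeff).prod = (W.prod).leadingCoeff :=
      (Polynomial.leadingCoeff_multiset_prod W).symm
    rw [h3]
    have h4 : f.leadingCoeff = (W.prod).leadingCoeff * r := by
      rw [← hfW, Polynomial.leadingCoeff_mul, Polynomial.leadingCoeff_C]
    have h5 : |(r:ℝ)| = 1 := by
      rcases Int.isUnit_iff.mp hru with h | h <;> simp [h]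
    rw [Nat.cast_natAbs, Int.cast_abs, h4]
    push_cast
    rw [abs_mul, h5, mul_one]
  rw [hQ, hA] at htot
  -- final arithmetic
  have hBpos : (0:ℝ) < ((f.leadingCoeff.natAbs : ℝ)) ^ n₂ := by
    apply pow_pos
    have : f.leadingCoeff ≠ 0 := Polynomial.leadingCoeff_ne_zero.mpr hf
    have : 1 ≤ f.leadingCoeff.natAbs := by omega
    exact_mod_cast Nat.lt_of_lt_of_le Nat.zero_lt_one this
  rw [zpow_neg, zpow_natCast]
  rw [inv_le_iff_one_le_mul₀ hBpos]
  rwa [mul_comm] at htot
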